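/- Fix an integer K ≥ 2, an index k : Fin K, and ᾱ ∈ [0,1); set σ̃ = √(1 − ᾱ²) and let μ_k = N(ᾱ e_k, σ̃² I_K). Then for every index i ≠ k, μ_k({w | ∀ j ≠ i, w j < w i}) = (1/(K−1)) · (1 − ∫_ℝ φ(z − ᾱ/σ̃) · Φ(z)^{K−1} dz). In particular this probability is the same for all i ≠ k. -/

import Mathlib

open MeasureTheory ProbabilityTheory
open scoped ENNReal NNReal

/-- The standard normal density `φ(z) = exp(-z²/2)/√(2π)`. -/
noncomputable def stdGaussianPDF (z : ℝ) : ℝ :=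
  Real.exp (-z ^ 2 / 2) / Real.sqrt (2 * Real.pi)

/-- The standard normal cumulative distribution function `Φ(z) = ∫_{-∞}^z φ(u) du`. -/
noncomputable def stdGaussianCDF (z : ℝ) : ℝ :=
  ∫ u in Set.Iic z, stdGaussianPDF u

lemma stdGaussianPDF_eq : stdGaussianPDF = gaussianPDFReal 0 1 := by
  funext x
  rw [stdGaussianPDF, gaussianPDFReal]
  rw [NNReal.coe_one, mul_one, sub_zero, inv_mul_eq_div, mul_one]

lemma stdGaussianPDF_nonneg (x : ℝ) : 0 ≤ stdGaussianPDF x := by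
  rw [stdGaussianPDF_eq]; exact gaussianPDFReal_nonneg _ _ _

lemma integrable_stdGaussianPDF : Integrable stdGaussianPDF := by
  rw [stdGaussianPDF_eq]; exact ProbabilityTheory.integrable_gaussianPDFReal 0 1

lemma stdGaussianCDF_nonneg (z : ℝ) : 0 ≤ stdGaussianCDF z :=
  setIntegral_nonneg measurableSet_Iic fun x _ => stdGaussianPDF_nonneg x

lemma stdGaussianCDF_le_one (z : ℝ) : stdGaussianCDF z ≤ 1 := by
  have h1 : (∫ x, stdGaussianPDF x) = 1 := by
    rw [stdGaussianPDF_eq]; exact ProbabilityTheory.integral_gaussianPDFReal_eq_one 0 one_ne_zero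
  calc stdGaussianCDF z ≤ ∫ x, stdGaussianPDF x := by
        exact setIntegral_le_integral integrable_stdGaussianPDF
          (ae_of_all _ fun x => stdGaussianPDF_nonneg x)
    _ = 1 := h1

lemma monotone_stdGaussianCDF : Monotone stdGaussianCDF := fun a b hab => by
  exact setIntegral_mono_set integrable_stdGaussianPDF.integrableOn
    (ae_of_all _ fun x => stdGaussianPDF_nonneg x) (HasSubset.Subset.eventuallyLE (Set.Iic_subset_Iic.2 hab))

lemma measurable_stdGaussianCDF : Measurable stdGaussianCDF :=
  monotone_stdGaussianCDF.measurable

lemma stdGauss_Iio (z : ℝ) :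
    gaussianReal 0 1 (Set.Iio z) = ENNReal.ofReal (stdGaussianCDF z) := by
  rw [gaussianReal_apply_eq_integral 0 one_ne_zero, stdGaussianCDF, stdGaussianPDF_eq,
    setIntegral_congr_set Iio_ae_eq_Iic]

lemma measurable_stdGaussianPDF : Measurable stdGaussianPDF := by
  rw [stdGaussianPDF_eq]; exact measurable_gaussianPDFReal 0 1

lemma lemA (n : ℕ) (k : Fin (n+1)) (α : ℝ) (hα0 : 0 ≤ α) (hα1 : α < 1) :
    (Measure.pi fun j : Fin (n+1) =>
        gaussianReal (if j = k then α else 0) (Real.toNNReal (1 - α^2)))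
      {w | ∀ j ≠ k, w j < w k}
    = ENNReal.ofReal (∫ z : ℝ, stdGaussianPDF (z - α / Real.sqrt (1 - α^2))
        * stdGaussianCDF z ^ n) := by
  have h1 : (0:ℝ) < 1 - α ^ 2 := by nlinarith
  set σ : ℝ := Real.sqrt (1 - α^2) with hσdef
  have hσ : 0 < σ := Real.sqrt_pos.2 h1
  set v : NNReal := Real.toNNReal (1 - α^2) with hvdef
  have hv : v ≠ 0 := (Real.toNNReal_pos.mpr h1).ne'
  set m : Fin (n+1) → ℝ := fun j => if j = k then α else 0 with hm
  set β : ℝ := α / σ with hβ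
  -- map facts
  have hmap1 : Measure.map (σ * ·) (gaussianReal 0 1) = gaussianReal 0 v := by
    rw [gaussianReal_map_const_mul σ, mul_zero]
    congr 1
    ext
    simp [v, hσdef, Real.sq_sqrt h1.le, Real.coe_toNNReal _ h1.le]
  have hmap : Measure.map (fun t => σ * t + α) (gaussianReal 0 1) = gaussianReal α v := by
    have : (fun t => σ * t + α) = (· + α) ∘ (σ * ·) := rfl
    rw [this, ← Measure.map_map (measurable_add_const α) (measurable_const_mul σ), hmap1,
      gaussianReal_map_add_const, zero_add]
  have hG : ∀ x : ℝ, gaussianReal 0 v (Set.Iio x) = ENNReal.ofReal (stdGaussianCDF (x/σ)) := by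
    intro x
    rw [← hmap1, Measure.map_apply (measurable_const_mul σ) measurableSet_Iio]
    have : (σ * ·) ⁻¹' Set.Iio x = Set.Iio (x/σ) := by
      ext t
      simp [lt_div_iff₀ hσ, mul_comm]
    rw [this, stdGauss_Iio]
  -- decompose at k
  set S : Set (ℝ × (Fin n → ℝ)) := {p | ∀ j, p.2 j < p.1} with hSdef
  have hS : MeasurableSet S := by
    have : S = ⋂ j, {p : ℝ × (Fin n → ℝ) | p.2 j < p.1} := by
      ext p; simp [S, Set.mem_iInter]
    rw [this]
    exact MeasurableSet.iInter fun j =>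
      measurableSet_lt (measurable_snd.eval) measurable_fst
  have hpre : {w : Fin (n+1) → ℝ | ∀ j ≠ k, w j < w k}
      = (MeasurableEquiv.piFinSuccAbove (fun _ => ℝ) k) ⁻¹' S := by
    ext w
    simp only [Set.mem_preimage, Set.mem_setOf_eq, MeasurableEquiv.piFinSuccAbove_apply, S]
    constructor
    · intro h j
      exact h _ (Fin.succAbove_ne k j)
    · intro h j hj
      obtain ⟨l, rfl⟩ := Fin.exists_succAbove_eq hj
      exact h l
  have hrest : (fun j : Fin n => gaussianReal (m (k.succAbove j)) v)
      = fun _ => gaussianReal 0 v := by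
    funext j
    rw [hm]
    simp [Fin.succAbove_ne k j]
  have hmp := measurePreserving_piFinSuccAbove (fun j => gaussianReal (m j) v) k
  rw [hpre, hmp.measure_preimage hS.nullMeasurableSet]
  have hmk : m k = α := by simp [hm]
  rw [hrest, hmk, Measure.prod_apply hS]
  have hinner : ∀ x : ℝ, (Measure.pi fun _ : Fin n => gaussianReal 0 v)
      (Prod.mk x ⁻¹' S) = (ENNReal.ofReal (stdGaussianCDF (x/σ)))^n := by
    intro x
    have : Prod.mk x ⁻¹' S = Set.pi Set.univ fun _ : Fin n => Set.Iio x := by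
      ext y; simp [S]
    rw [this, Measure.pi_pi, hG, Finset.prod_const, Finset.card_univ, Fintype.card_fin]
  simp_rw [hinner]
  have hg1 : Measurable fun x : ℝ => ENNReal.ofReal (stdGaussianCDF (x / σ)) ^ n :=
    ((measurable_stdGaussianCDF.comp (measurable_id.div_const σ)).ennreal_ofReal).pow_const n
  rw [← hmap, lintegral_map hg1 (by exact (measurable_const_mul σ).add_const α)]
  have harg : ∀ t : ℝ, (σ * t + α)/σ = t + β := by
    intro t; rw [hβ]; field_simp
  simp_rw [harg]
  have hg2 : Measurable fun a : ℝ => ENNReal.ofReal (stdGaussianCDF (a + β)) ^ n :=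
    ((measurable_stdGaussianCDF.comp (measurable_add_const β)).ennreal_ofReal).pow_const n
  rw [gaussianReal_of_var_ne_zero 0 one_ne_zero,
    lintegral_withDensity_eq_lintegral_mul _ (measurable_gaussianPDF 0 1) hg2]
  have heq : ∀ t : ℝ, (gaussianPDF 0 1 * fun t => (ENNReal.ofReal (stdGaussianCDF (t + β)))^n) t
      = ENNReal.ofReal (stdGaussianPDF t * stdGaussianCDF (t+β)^n) := by
    intro t
    simp only [Pi.mul_apply, gaussianPDF, ← stdGaussianPDF_eq]
    rw [← ENNReal.ofReal_pow (stdGaussianCDF_nonneg _),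
      ← ENNReal.ofReal_mul (stdGaussianPDF_nonneg _)]
  simp_rw [heq]
  have hfmeas : Measurable fun t => stdGaussianPDF t * stdGaussianCDF (t+β)^n :=
    measurable_stdGaussianPDF.mul
      ((measurable_stdGaussianCDF.comp (measurable_id.add_const β)).pow_const n)
  have hint : Integrable fun t => stdGaussianPDF t * stdGaussianCDF (t+β)^n := by
    refine integrable_stdGaussianPDF.mono hfmeas.aestronglyMeasurable (ae_of_all _ fun t => ?_)
    simp only [Real.norm_eq_abs]
    rw [abs_of_nonneg (mul_nonneg (stdGaussianPDF_nonneg t)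
      (pow_nonneg (stdGaussianCDF_nonneg _) n)), abs_of_nonneg (stdGaussianPDF_nonneg t)]
    calc stdGaussianPDF t * stdGaussianCDF (t+β)^n
        ≤ stdGaussianPDF t * 1 := by
          gcongr
          · exact stdGaussianPDF_nonneg t
          · exact pow_le_one₀ (stdGaussianCDF_nonneg _) (stdGaussianCDF_le_one _)
      _ = stdGaussianPDF t := mul_one _
  rw [← ofReal_integral_eq_lintegral_ofReal hint
    (ae_of_all _ fun t => mul_nonneg (stdGaussianPDF_nonneg t)
      (pow_nonneg (stdGaussianCDF_nonneg _) n))]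
  congr 1
  rw [← (measurePreserving_add_right volume β).integral_comp
    (Homeomorph.addRight β).measurableEmbedding
    (fun z => stdGaussianPDF (z - β) * stdGaussianCDF z ^ n)]
  congr 1
  funext t
  simp only [Homeomorph.coe_addRight, add_sub_cancel_right]

lemma measA {N : ℕ} (i : Fin N) :
    MeasurableSet {w : Fin N → ℝ | ∀ j, j ≠ i → w j < w i} := by
  have : {w : Fin N → ℝ | ∀ j, j ≠ i → w j < w i}
      = ⋂ j, {w : Fin N → ℝ | j ≠ i → w j < w i} := by ext; simp
  rw [this]
  refine MeasurableSet.iInter fun j => ?_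
  by_cases hj : j = i
  · simp [hj]
  · have : {w : Fin N → ℝ | j ≠ i → w j < w i} = {w | w j < w i} := by ext w; simp [hj]
    rw [this]; exact measurableSet_lt (measurable_pi_apply j) (measurable_pi_apply i)

lemma lemB (n : ℕ) (m : Fin (n+1) → ℝ) (v : NNReal) (hv : v ≠ 0)
    (a b : Fin (n+1)) (hab : a ≠ b) :
    Measure.pi (fun j => gaussianReal (m j) v) {w | w a = w b} = 0 := by
  obtain ⟨l, hl⟩ := Fin.exists_succAbove_eq (Ne.symm hab)
  set S : Set (ℝ × (Fin n → ℝ)) := {p | p.1 = p.2 l} with hSdef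
  have hS : MeasurableSet S := measurableSet_eq_fun measurable_fst (measurable_snd.eval)
  have hpre : {w : Fin (n+1) → ℝ | w a = w b}
      = (MeasurableEquiv.piFinSuccAbove (fun _ => ℝ) a) ⁻¹' S := by
    ext w
    simp only [Set.mem_preimage, Set.mem_setOf_eq, MeasurableEquiv.piFinSuccAbove_apply, S]
    rw [← hl]
    rfl
  have hmp := measurePreserving_piFinSuccAbove (fun j => gaussianReal (m j) v) a
  rw [hpre, hmp.measure_preimage hS.nullMeasurableSet, Measure.prod_apply hS]
  have hz : ∀ x : ℝ, (Measure.pi fun j : Fin n => gaussianReal (m (a.succAbove j)) v)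
      (Prod.mk x ⁻¹' S) = 0 := by
    intro x
    refine measure_mono_null (t := Set.pi Set.univ
      (fun j : Fin n => if j = l then {x} else Set.univ)) ?_ ?_
    · intro y hy
      simp only [Set.mem_preimage, Set.mem_setOf_eq, S] at hy
      intro j _
      by_cases hjl : j = l
      · subst hjl; simp [← hy]
      · simp [hjl]
    · rw [Measure.pi_pi]
      refine Finset.prod_eq_zero (Finset.mem_univ l) ?_
      simp only [if_pos rfl]
      exact (gaussianReal_absolutelyContinuous _ hv) Real.volume_singleton
  simp_rw [hz]
  exact lintegral_zero

lemma lemC (n : ℕ) (k : Fin (n+1)) (α : ℝ) (v : NNReal) (i₁ i₂ : Fin (n+1))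
    (h1 : i₁ ≠ k) (h2 : i₂ ≠ k) :
    (Measure.pi fun j => gaussianReal (if j = k then α else 0) v)
      {w | ∀ j, j ≠ i₁ → w j < w i₁}
    = (Measure.pi fun j => gaussianReal (if j = k then α else 0) v)
      {w | ∀ j, j ≠ i₂ → w j < w i₂} := by
  set f := Equiv.swap i₁ i₂ with hf
  have hfk : f k = k := Equiv.swap_apply_of_ne_of_ne (Ne.symm h1) (Ne.symm h2)
  have hmf : (fun j => gaussianReal (if f j = k then α else 0) v)
      = fun j => gaussianReal (if j = k then α else 0) v := by
    funext j
    congr 1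
    by_cases hj : j = k
    · rw [if_pos hj, if_pos (by rw [hj, hfk])]
    · rw [if_neg hj, if_neg (fun hc => hj (f.injective (hc.trans hfk.symm)))]
  have hmp := measurePreserving_piCongrLeft
    (fun j => gaussianReal (if j = k then α else 0) v) f
  rw [hmf] at hmp
  have hval : ∀ (w : Fin (n+1) → ℝ) (b : Fin (n+1)),
      (Equiv.piCongrLeft (fun _ => ℝ) f) w b = w (f.symm b) := by
    intro w b
    conv_lhs => rw [show b = f (f.symm b) by simp]
    rw [Equiv.piCongrLeft_apply_apply]
  have hpre : (⇑(MeasurableEquiv.piCongrLeft (fun _ : Fin (n+1) => ℝ) f)) ⁻¹'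
        {w | ∀ j, j ≠ i₂ → w j < w i₂} = {w | ∀ j, j ≠ i₁ → w j < w i₁} := by
    ext w
    simp only [Set.mem_preimage, Set.mem_setOf_eq, MeasurableEquiv.coe_piCongrLeft, hval]
    simp only [hf, Equiv.symm_swap]
    rw [show Equiv.swap i₁ i₂ i₂ = i₁ from Equiv.swap_apply_right i₁ i₂]
    constructor
    · intro h j hj
      have hne : Equiv.swap i₁ i₂ j ≠ i₂ := fun hc => hj (by
        have := congrArg (Equiv.swap i₁ i₂) hc
        rwa [Equiv.swap_apply_self, Equiv.swap_apply_right] at this)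
      have := h (Equiv.swap i₁ i₂ j) hne
      rwa [Equiv.swap_apply_self] at this
    · intro h j hj
      refine h (Equiv.swap i₁ i₂ j) (fun hc => hj ?_)
      have := congrArg (Equiv.swap i₁ i₂) hc
      rwa [Equiv.swap_apply_self, Equiv.swap_apply_left] at this
  rw [← hpre, hmp.measure_preimage (measA i₂).nullMeasurableSet]

lemma lemD (n : ℕ) (k : Fin (n+1)) (α : ℝ) (v : NNReal) (hv : v ≠ 0) :
    ∑ i : Fin (n+1), (Measure.pi fun j => gaussianReal (if j = k then α else 0) v)
      {w | ∀ j, j ≠ i → w j < w i} = 1 := by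
  set μ := Measure.pi fun j : Fin (n+1) => gaussianReal (if j = k then α else 0) v with hμ
  have : IsProbabilityMeasure μ := by infer_instance
  set A : Fin (n+1) → Set (Fin (n+1) → ℝ) := fun i => {w | ∀ j, j ≠ i → w j < w i} with hA
  have hdisj : Pairwise (Function.onFun Disjoint A) := by
    intro a b hab
    refine Set.disjoint_left.2 fun w hwa hwb => ?_
    exact absurd (hwa b (Ne.symm hab)) (not_lt.2 (le_of_lt (hwb a hab)))
  have hsum : ∑ i, μ (A i) = μ (⋃ i, A i) := by
    rw [measure_iUnion hdisj (fun i => measA i), tsum_fintype]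
  rw [hsum]
  refine le_antisymm prob_le_one ?_
  set T : Set (Fin (n+1) → ℝ) := ⋃ (a : Fin (n+1)) (b : Fin (n+1)) (_ : a ≠ b),
    {w | w a = w b} with hT
  have hTnull : μ T = 0 :=
    measure_iUnion_null fun a => measure_iUnion_null fun b =>
      measure_iUnion_null fun hab => lemB n _ v hv a b hab
  have hcover : (Set.univ : Set (Fin (n+1) → ℝ)) ⊆ (⋃ i, A i) ∪ T := by
    intro w _
    obtain ⟨i, hi⟩ := Finite.exists_max w
    by_cases hAi : ∀ j, j ≠ i → w j < w i
    · exact Or.inl (Set.mem_iUnion.2 ⟨i, hAi⟩)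
    · push_neg at hAi
      obtain ⟨j, hj, hge⟩ := hAi
      refine Or.inr (Set.mem_iUnion.2 ⟨j, Set.mem_iUnion.2 ⟨i, Set.mem_iUnion.2 ⟨hj, ?_⟩⟩⟩)
      exact le_antisymm (hi j) hge
  calc (1 : ℝ≥0∞) = μ Set.univ := (measure_univ).symm
    _ ≤ μ ((⋃ i, A i) ∪ T) := measure_mono hcover
    _ ≤ μ (⋃ i, A i) + μ T := measure_union_le _ _
    _ = μ (⋃ i, A i) := by rw [hTnull, add_zero]


/-- For `K ≥ 2`, `k : Fin K`, `ᾱ ∈ [0,1)`, `σ̃ = √(1-ᾱ²)` and any index `i ≠ k`, the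
product Gaussian `N(ᾱ e_k, σ̃² I_K)` gives the event that coordinate `i` is the strict
maximum the probability `(1/(K-1)) (1 - ∫_ℝ φ(z - ᾱ/σ̃) Φ(z)^{K-1} dz)`; in particular
this probability is the same for all `i ≠ k`. -/
theorem gaussian_argmax_at_other_index (K : ℕ) (hK : 2 ≤ K) (k : Fin K)
    (α : ℝ) (hα0 : 0 ≤ α) (hα1 : α < 1) (i : Fin K) (hik : i ≠ k) :
    (Measure.pi fun j : Fin K =>
        gaussianReal (if j = k then α else 0) (Real.toNNReal (1 - α ^ 2)))
        {w | ∀ j ≠ i, w j < w i}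
      = ENNReal.ofReal
          ((1 / ((K : ℝ) - 1)) *
            (1 - ∫ z : ℝ, stdGaussianPDF (z - α / Real.sqrt (1 - α ^ 2))
                * stdGaussianCDF z ^ (K - 1))) := by
  obtain ⟨n, rfl⟩ : ∃ n, K = n + 1 := ⟨K - 1, by omega⟩
  have hn : 1 ≤ n := by omega
  have h1 : (0:ℝ) < 1 - α ^ 2 := by nlinarith
  set v : NNReal := Real.toNNReal (1 - α ^ 2) with hv_def
  have hv : v ≠ 0 := (Real.toNNReal_pos.mpr h1).ne'
  set μ := Measure.pi fun j : Fin (n+1) => gaussianReal (if j = k then α else 0) v with hμ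
  have : IsProbabilityMeasure μ := by rw [hμ]; infer_instance
  simp only [Nat.add_sub_cancel]
  set I := ∫ z : ℝ, stdGaussianPDF (z - α / Real.sqrt (1 - α ^ 2))
      * stdGaussianCDF z ^ n with hI
  have hI0 : 0 ≤ I := integral_nonneg fun z =>
    mul_nonneg (stdGaussianPDF_nonneg _) (pow_nonneg (stdGaussianCDF_nonneg _) n)
  have hAk : μ {w | ∀ j, j ≠ k → w j < w k} = ENNReal.ofReal I := lemA n k α hα0 hα1
  have hsum : ∑ i' : Fin (n+1), μ {w | ∀ j, j ≠ i' → w j < w i'} = 1 := lemD n k α v hv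
  have hsplit : ∑ i' : Fin (n+1), μ {w | ∀ j, j ≠ i' → w j < w i'}
      = μ {w | ∀ j, j ≠ k → w j < w k}
        + ∑ i' ∈ Finset.univ.erase k, μ {w | ∀ j, j ≠ i' → w j < w i'} :=
    (Finset.add_sum_erase _ _ (Finset.mem_univ k)).symm
  have herase : ∑ i' ∈ Finset.univ.erase k, μ {w | ∀ j, j ≠ i' → w j < w i'}
      = n • μ {w | ∀ j, j ≠ i → w j < w i} := by
    rw [Finset.sum_congr rfl
      (fun i' hi' => lemC n k α v i' i (Finset.ne_of_mem_erase hi') hik),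
      Finset.sum_const, Finset.card_erase_of_mem (Finset.mem_univ k), Finset.card_univ,
      Fintype.card_fin, Nat.add_sub_cancel]
  rw [hsplit, hAk, herase] at hsum
  have hx_ne : μ {w | ∀ j, j ≠ i → w j < w i} ≠ ⊤ := measure_ne_top _ _
  set x := μ {w | ∀ j, j ≠ i → w j < w i} with hx
  have hreal := congrArg ENNReal.toReal hsum
  rw [ENNReal.toReal_add ENNReal.ofReal_ne_top (by
      simp only [nsmul_eq_mul]
      exact ENNReal.mul_ne_top (ENNReal.natCast_ne_top n) hx_ne),
    ENNReal.toReal_ofReal hI0, ENNReal.toReal_one] at hreal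
  have hsm : (n • x).toReal = (n : ℝ) * x.toReal := by
    rw [nsmul_eq_mul, ENNReal.toReal_mul, ENNReal.toReal_natCast]
  rw [hsm] at hreal
  have hnR : (1:ℝ) ≤ (n : ℝ) := by exact_mod_cast hn
  rw [← ENNReal.ofReal_toReal hx_ne]
  congr 1
  have : ((n:ℝ) + 1 - 1) = (n:ℝ) := by ring
  push_cast
  rw [this]
  have hn0 : (n:ℝ) ≠ 0 := by linarith
  field_simp
  linarith
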